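/- The NURBS basis functions have the partition of unity property: if the weights w 0, …, w (n−1) are all strictly positive, then for every s ∈ ℝ with k p ≤ s < k n the denominator ∑_{j=0}^{n-1} w j · B^{(j,p)}(s) is strictly positive and ∑_{i=0}^{n-1} N^i(s) = 1, where N^i(s) := w i · B^{(i,p)}(s) / ∑_{j=0}^{n-1} w j · B^{(j,p)}(s). -/

import Mathlib

/-- Interpolation factor τ(i,q,s) in the Cox–de Boor recursion. -/
noncomputable def coxTau (k : ℕ → ℝ) (i q : ℕ) (s : ℝ) : ℝ :=
  if k (i + q) ≠ k i then (s - k i) / (k (i + q) - k i) else 0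

/-- Interpolation factor σ(i,q,s) in the Cox–de Boor recursion. -/
noncomputable def coxSigma (k : ℕ → ℝ) (i q : ℕ) (s : ℝ) : ℝ :=
  if k (i + q + 1) ≠ k (i + 1) then (k (i + q + 1) - s) / (k (i + q + 1) - k (i + 1)) else 0

/-- The B-spline basis function `Bspline k p i` of degree `p` with index `i`
associated with the knot vector `k`, defined by the Cox–de Boor recursion. -/
noncomputable def Bspline (k : ℕ → ℝ) : ℕ → ℕ → ℝ → ℝ
  | 0, i, s => if k i ≤ s ∧ s < k (i + 1) then 1 else 0
  | q + 1, i, s =>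
      coxTau k i (q + 1) s * Bspline k q i s +
      coxSigma k i (q + 1) s * Bspline k q (i + 1) s

lemma kMono {k : ℕ → ℝ} (hk : ∀ j, k j ≤ k (j + 1)) : Monotone k :=
  monotone_nat_of_le_succ hk

/-- Support: `Bspline k q i` vanishes outside `[k i, k (i+q+1))`. -/
lemma Bspline_support {k : ℕ → ℝ} (hk : ∀ j, k j ≤ k (j + 1)) :
    ∀ q i (s : ℝ), (s < k i ∨ k (i + q + 1) ≤ s) → Bspline k q i s = 0 := by
  intro q
  induction q with
  | zero =>
    intro i s h
    simp only [Bspline, ite_eq_right_iff, one_ne_zero]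
    rintro ⟨ha, hb⟩
    rcases h with h | h
    · linarith
    · simp only [Nat.add_zero] at h; linarith
  | succ q ih =>
    intro i s h
    have h1 : Bspline k q i s = 0 := by
      apply ih
      rcases h with h | h
      · exact Or.inl h
      · exact Or.inr (le_trans (kMono hk (by omega)) h)
    have h2 : Bspline k q (i + 1) s = 0 := by
      apply ih
      rcases h with h | h
      · exact Or.inl (lt_of_lt_of_le h (kMono hk (by omega)))
      · refine Or.inr ?_
        have : i + 1 + q + 1 = i + (q + 1) + 1 := by omega
        rw [this]; exact h
    simp [Bspline, h1, h2]

lemma Bspline_nonneg {k : ℕ → ℝ} (hk : ∀ j, k j ≤ k (j + 1)) :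
    ∀ q i (s : ℝ), 0 ≤ Bspline k q i s := by
  intro q
  induction q with
  | zero =>
    intro i s
    simp only [Bspline]
    positivity
  | succ q ih =>
    intro i s
    simp only [Bspline]
    have hA : 0 ≤ coxTau k i (q + 1) s * Bspline k q i s := by
      by_cases hz : Bspline k q i s = 0
      · simp [hz]
      · have hsupp : k i ≤ s ∧ s < k (i + q + 1) := by
          by_contra hc
          push_neg at hc
          rcases le_or_gt (k i) s with h | h
          · exact hz (Bspline_support hk q i s (Or.inr (hc h)))
          · exact hz (Bspline_support hk q i s (Or.inl h))
        have htau : 0 ≤ coxTau k i (q + 1) s := by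
          unfold coxTau
          split_ifs with hne
          · have hle : k i ≤ k (i + (q + 1)) := kMono hk (by omega)
            have hlt : k i < k (i + (q + 1)) := lt_of_le_of_ne hle (Ne.symm hne)
            apply div_nonneg <;> linarith [hsupp.1]
          · exact le_refl 0
        exact mul_nonneg htau (ih i s)
    have hB : 0 ≤ coxSigma k i (q + 1) s * Bspline k q (i + 1) s := by
      by_cases hz : Bspline k q (i + 1) s = 0
      · simp [hz]
      · have hsupp : k (i + 1) ≤ s ∧ s < k (i + 1 + q + 1) := by
          by_contra hc
          push_neg at hc
          rcases le_or_gt (k (i + 1)) s with h | h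
          · exact hz (Bspline_support hk q (i + 1) s (Or.inr (hc h)))
          · exact hz (Bspline_support hk q (i + 1) s (Or.inl h))
        have hsig : 0 ≤ coxSigma k i (q + 1) s := by
          unfold coxSigma
          split_ifs with hne
          · have hle : k (i + 1) ≤ k (i + (q + 1) + 1) := kMono hk (by omega)
            have hlt : k (i + 1) < k (i + (q + 1) + 1) := lt_of_le_of_ne hle (Ne.symm hne)
            have : i + 1 + q + 1 = i + (q + 1) + 1 := by omega
            rw [this] at hsupp
            apply div_nonneg <;> linarith [hsupp.2]
          · exact le_refl 0
        exact mul_nonneg hsig (ih (i + 1) s)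
    linarith

/-- Partition of unity for degree 0. -/
lemma Bspline_zero_sum {k : ℕ → ℝ} (hk : ∀ j, k j ≤ k (j + 1)) :
    ∀ n m (s : ℝ), k m ≤ s → s < k n →
      ∑ i ∈ Finset.Ico m n, Bspline k 0 i s = 1 := by
  intro n
  induction n with
  | zero =>
    intro m s hm hn
    exact absurd (lt_of_le_of_lt hm hn) (not_lt.2 (kMono hk (Nat.zero_le m)))
  | succ n ih =>
    intro m s hm hn
    have hmn : m < n + 1 := by
      by_contra h
      push_neg at h
      exact absurd (lt_of_le_of_lt hm hn) (not_lt.2 (kMono hk h))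
    rw [Finset.sum_Ico_succ_top (by omega : m ≤ n)]
    by_cases hc : k n ≤ s
    · have hlast : Bspline k 0 n s = 1 := by simp [Bspline, hc, hn]
      have hrest : ∀ i ∈ Finset.Ico m n, Bspline k 0 i s = 0 := by
        intro i hi
        rw [Finset.mem_Ico] at hi
        have : k (i + 1) ≤ k n := kMono hk (by omega)
        simp only [Bspline, ite_eq_right_iff, one_ne_zero]
        rintro ⟨_, hb⟩; linarith
      rw [Finset.sum_eq_zero hrest, hlast]; ring
    · push_neg at hc
      have hlast : Bspline k 0 n s = 0 := by
        simp only [Bspline, ite_eq_right_iff, one_ne_zero]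
        rintro ⟨ha, _⟩; linarith
      rw [hlast, ih m s hm hc]; ring

/-- Partition of unity for all degrees. -/
lemma Bspline_partition {k : ℕ → ℝ} (hk : ∀ j, k j ≤ k (j + 1)) (n : ℕ) :
    ∀ q m (s : ℝ), k (m + q) ≤ s → s < k n →
      ∑ i ∈ Finset.Ico m n, Bspline k q i s = 1 := by
  intro q
  induction q with
  | zero =>
    intro m s hm hn
    exact Bspline_zero_sum hk n m s (by simpa using hm) hn
  | succ q ih =>
    intro m s hm hn
    have hmn : m < n := by
      by_contra h
      push_neg at h
      have := kMono hk (le_trans h (Nat.le_add_right m (q + 1)))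
      linarith
    set F : ℕ → ℝ := fun i => coxTau k i (q + 1) s * Bspline k q i s with hF
    have key : ∀ i, Bspline k (q + 1) i s =
        (F i - F (i + 1)) + Bspline k q (i + 1) s := by
      intro i
      show coxTau k i (q + 1) s * Bspline k q i s +
          coxSigma k i (q + 1) s * Bspline k q (i + 1) s = _
      by_cases hz : Bspline k q (i + 1) s = 0
      · simp [hF, hz]
      · have hsupp : k (i + 1) ≤ s ∧ s < k (i + 1 + q + 1) := by
          by_contra hc
          push_neg at hc
          rcases le_or_gt (k (i + 1)) s with h | h
          · exact hz (Bspline_support hk q (i + 1) s (Or.inr (hc h)))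
          · exact hz (Bspline_support hk q (i + 1) s (Or.inl h))
        have hne : k (i + 1 + (q + 1)) ≠ k (i + 1) := by
          intro h
          have heq : i + 1 + q + 1 = i + 1 + (q + 1) := by omega
          rw [heq, h] at hsupp
          linarith [hsupp.1, hsupp.2]
        have hne' : k (i + (q + 1) + 1) ≠ k (i + 1) := by
          have : i + (q + 1) + 1 = i + 1 + (q + 1) := by omega
          rw [this]; exact hne
        have hcs : coxSigma k i (q + 1) s = 1 - coxTau k (i + 1) (q + 1) s := by
          unfold coxSigma coxTau
          rw [if_pos hne', if_pos hne]
          have h1 : i + (q + 1) + 1 = i + 1 + (q + 1) := by omega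
          rw [h1]
          have hd : k (i + 1 + (q + 1)) - k (i + 1) ≠ 0 := sub_ne_zero.2 hne
          field_simp
          ring
        rw [hcs, hF]
        ring
    calc ∑ i ∈ Finset.Ico m n, Bspline k (q + 1) i s
        = ∑ i ∈ Finset.Ico m n, ((F i - F (i + 1)) + Bspline k q (i + 1) s) :=
          Finset.sum_congr rfl (fun i _ => key i)
      _ = (∑ i ∈ Finset.Ico m n, (F i - F (i + 1))) +
            ∑ i ∈ Finset.Ico m n, Bspline k q (i + 1) s := Finset.sum_add_distrib
      _ = 1 := by
          have htel : ∑ i ∈ Finset.Ico m n, (F i - F (i + 1)) = F m - F n := by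
            rw [Finset.sum_Ico_eq_sum_range]
            have hnm : m + (n - m) = n := by omega
            calc ∑ j ∈ Finset.range (n - m), (F (m + j) - F (m + j + 1))
                = F (m + 0) - F (m + (n - m)) :=
                  Finset.sum_range_sub' (fun j => F (m + j)) (n - m)
              _ = F m - F n := by rw [Nat.add_zero, hnm]
          have hFm : F m = 0 := by
            have hB : Bspline k q m s = 0 := by
              apply Bspline_support hk q m s
              refine Or.inr ?_
              have : m + q + 1 = m + (q + 1) := by omega
              rw [this]; exact hm
            show coxTau k m (q + 1) s * Bspline k q m s = 0
            rw [hB, mul_zero]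
          have hFn : F n = 0 := by
            have hB : Bspline k q n s = 0 := Bspline_support hk q n s (Or.inl hn)
            show coxTau k n (q + 1) s * Bspline k q n s = 0
            rw [hB, mul_zero]
          have hshift : ∑ i ∈ Finset.Ico m n, Bspline k q (i + 1) s =
              ∑ i ∈ Finset.Ico (m + 1) (n + 1), Bspline k q i s := by
            rw [← Finset.image_add_right_Ico m n 1]
            rw [Finset.sum_image (by intro a _ b _ h; simp only at h; omega)]
          have hlast : Bspline k q n s = 0 := Bspline_support hk q n s (Or.inl hn)
          have hmain : ∑ i ∈ Finset.Ico (m + 1) n, Bspline k q i s = 1 := by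
            apply ih (m + 1) s _ hn
            have : m + 1 + q = m + (q + 1) := by omega
            rw [this]; exact hm
          rw [htel, hFm, hFn, hshift,
            Finset.sum_Ico_succ_top (by omega : m + 1 ≤ n), hmain, hlast]
          ring

theorem nurbs_partition_of_unity (n p : ℕ) (hn : 1 ≤ n) (k : ℕ → ℝ)
    (hk : ∀ j, k j ≤ k (j + 1)) (w : ℕ → ℝ) (hw : ∀ i < n, 0 < w i)
    (s : ℝ) (h1 : k p ≤ s) (h2 : s < k n) :
    0 < ∑ j ∈ Finset.range n, w j * Bspline k p j s ∧
      ∑ i ∈ Finset.range n,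
        w i * Bspline k p i s / ∑ j ∈ Finset.range n, w j * Bspline k p j s = 1 := by
  have hpart : ∑ i ∈ Finset.range n, Bspline k p i s = 1 := by
    rw [Finset.range_eq_Ico]
    exact Bspline_partition hk n p 0 s (by rw [Nat.zero_add]; exact h1) h2
  have hex : ∃ i ∈ Finset.range n, 0 < w i * Bspline k p i s := by
    by_contra hc
    push_neg at hc
    have : ∑ i ∈ Finset.range n, Bspline k p i s = 0 := by
      apply Finset.sum_eq_zero
      intro i hi
      have hwi := hw i (Finset.mem_range.1 hi)
      have hBi := Bspline_nonneg hk p i s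
      have := hc i hi
      nlinarith
    rw [this] at hpart
    exact one_ne_zero hpart.symm
  have hpos : 0 < ∑ j ∈ Finset.range n, w j * Bspline k p j s := by
    apply Finset.sum_pos'
    · intro i hi
      exact mul_nonneg (hw i (Finset.mem_range.1 hi)).le (Bspline_nonneg hk p i s)
    · exact hex
  refine ⟨hpos, ?_⟩
  rw [← Finset.sum_div]
  exact div_self (ne_of_gt hpos)
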